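/- Let G be a graph with burning sequence S_G = (v_1, ..., v_n) of a burning (lambda, S_G). Then there exist disjoint subtrees T_1, ..., T_n of G whose vertex sets partition V(G), such that S_G is a burning sequence for a burning of the disjoint union H = T_1 + ... + T_n, and the corresponding burning map lambda_H is a homomorphism (|lambda_H(v) - lambda_H(w)| = 1 for all adjacent v, w in H). -/

import Mathlib

open SimpleGraph

/-- The `j`-th burned set `𝒩_j`: vertices within distance `j - k` of source `v_k` (`1 ≤ k ≤ j`). -/
def burnN {V : Type*} (G : SimpleGraph V) (s : ℕ → V) (n j : ℕ) : Set V :=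
  {w | ∃ k, 1 ≤ k ∧ k ≤ n ∧ k ≤ j ∧ G.Reachable (s k) w ∧ G.dist (s k) w ≤ j - k}

/-- The set `U_j`: vertices within distance `j - k` of source `v_k` for `1 ≤ k ≤ j - 1`. -/
def burnU {V : Type*} (G : SimpleGraph V) (s : ℕ → V) (n j : ℕ) : Set V :=
  {w | ∃ k, 1 ≤ k ∧ k ≤ n ∧ k + 1 ≤ j ∧ G.Reachable (s k) w ∧ G.dist (s k) w ≤ j - k}

/-- `(s 1, …, s n)` is a burning sequence: `v_j ∉ U_j` for `2 ≤ j ≤ n`, and `U_{n+1} = G`. -/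
def IsBurningSeq {V : Type*} (G : SimpleGraph V) (s : ℕ → V) (n : ℕ) : Prop :=
  1 ≤ n ∧ (∀ j, 2 ≤ j → j ≤ n → s j ∉ burnU G s n j) ∧ ∀ w, w ∈ burnU G s n (n + 1)

/-- The burning map `λ(w) = min { j | w ∈ 𝒩_j }`. -/
noncomputable def burnTime {V : Type*} (G : SimpleGraph V) (s : ℕ → V) (n : ℕ) (w : V) : ℕ :=
  sInf {j | w ∈ burnN G s n j}

/-- The end time `𝐓 = max_w λ(w)` of the burning. -/
noncomputable def endTime {V : Type*} [Fintype V] (G : SimpleGraph V) (s : ℕ → V) (n : ℕ) : ℕ :=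
  Finset.univ.sup (burnTime G s n)

/-- A burning whose burning map is a homomorphism: `|λ(v) - λ(w)| = 1` on every edge. -/
def IsBurningHom {V : Type*} (G : SimpleGraph V) (s : ℕ → V) (n : ℕ) : Prop :=
  IsBurningSeq G s n ∧
    ∀ v w, G.Adj v w →
      ((burnTime G s n v : ℤ) - burnTime G s n w).natAbs = 1
namespace BurnAux

variable {V : Type*} {G : SimpleGraph V} {s : ℕ → V} {n : ℕ}

noncomputable abbrev lam (G : SimpleGraph V) (s : ℕ → V) (n : ℕ) (w : V) : ℕ := burnTime G s n w

lemma lam_le {w : V} {k : ℕ} (hk1 : 1 ≤ k) (hk2 : k ≤ n) (hr : G.Reachable (s k) w) :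
    lam G s n w ≤ k + G.dist (s k) w :=
  Nat.sInf_le ⟨k, hk1, hk2, Nat.le_add_right _ _, hr, by omega⟩

lemma lam_mem (hS : IsBurningSeq G s n) (w : V) : w ∈ burnN G s n (lam G s n w) := by
  obtain ⟨k, hk1, hk2, hk3, hr, hd⟩ := hS.2.2 w
  exact Nat.sInf_mem (s := {j | w ∈ burnN G s n j}) ⟨n + 1, k, hk1, hk2, by omega, hr, hd⟩

lemma lam_spec (hS : IsBurningSeq G s n) (w : V) :
    ∃ k, 1 ≤ k ∧ k ≤ n ∧ G.Reachable (s k) w ∧ k + G.dist (s k) w = lam G s n w := by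
  obtain ⟨k, hk1, hk2, hkj, hr, hd⟩ := lam_mem hS w
  have := lam_le (G := G) (s := s) hk1 hk2 hr
  exact ⟨k, hk1, hk2, hr, by omega⟩

lemma lam_pos (hS : IsBurningSeq G s n) (w : V) : 1 ≤ lam G s n w := by
  obtain ⟨k, h1, _, _, he⟩ := lam_spec hS w; omega

lemma lam_le_nsucc (hS : IsBurningSeq G s n) (w : V) : lam G s n w ≤ n + 1 := by
  obtain ⟨k, hk1, hk2, hk3, hr, hd⟩ := hS.2.2 w
  have := lam_le (G := G) (s := s) hk1 hk2 hr
  omega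

lemma lam_s (hS : IsBurningSeq G s n) {k : ℕ} (hk1 : 1 ≤ k) (hk2 : k ≤ n) :
    lam G s n (s k) = k := by
  have hle : lam G s n (s k) ≤ k := by
    have := lam_le (G := G) (w := s k) hk1 hk2 (Reachable.refl _)
    simpa [SimpleGraph.dist_self] using this
  by_contra hne
  have hlt : lam G s n (s k) < k := lt_of_le_of_ne hle hne
  obtain ⟨k', h1, h2, hr, he⟩ := lam_spec hS (s k)
  have hk2' : 2 ≤ k := by have := lam_pos hS (s k); omega
  exact hS.2.1 k hk2' hk2 ⟨k', h1, h2, by omega, hr, by omega⟩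

lemma lam_adj (hS : IsBurningSeq G s n) {v w : V} (h : G.Adj v w) :
    lam G s n w ≤ lam G s n v + 1 := by
  obtain ⟨k, h1, h2, hr, he⟩ := lam_spec hS v
  obtain ⟨p, hp⟩ := hr.exists_walk_length_eq_dist
  have hr' : G.Reachable (s k) w := hr.trans h.reachable
  have hd : G.dist (s k) w ≤ G.dist (s k) v + 1 := by
    have := SimpleGraph.dist_le (p.append h.toWalk)
    simpa [Walk.length_append, hp] using this
  have := lam_le (G := G) h1 h2 hr'
  omega

lemma exists_parent (hS : IsBurningSeq G s n) {w : V}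
    (hns : ¬ ∃ k, 1 ≤ k ∧ k ≤ n ∧ s k = w) :
    ∃ w', G.Adj w' w ∧ lam G s n w' + 1 = lam G s n w := by
  obtain ⟨k, h1, h2, hr, he⟩ := lam_spec hS w
  have hd0 : G.dist (s k) w ≠ 0 := by
    intro h0
    exact hns ⟨k, h1, h2, hr.dist_eq_zero_iff.mp h0⟩
  obtain ⟨p, hp⟩ := hr.exists_walk_length_eq_dist
  have hne : w ≠ s k := fun hw => hns ⟨k, h1, h2, hw.symm⟩
  obtain ⟨y, hadj, q, hq⟩ := Walk.exists_eq_cons_of_ne hne p.reverse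
  have hql : q.length + 1 = G.dist (s k) w := by
    have h3 : p.reverse.length = p.length := Walk.length_reverse p
    rw [hq] at h3
    simp [Walk.length_cons] at h3
    omega
  have hdy : G.dist (s k) y ≤ q.length := by
    have := SimpleGraph.dist_le q.reverse
    simpa [Walk.length_reverse] using this
  have hly : lam G s n y ≤ k + G.dist (s k) y := lam_le h1 h2 ⟨q.reverse⟩
  have hwy : lam G s n w ≤ lam G s n y + 1 := lam_adj hS hadj.symm
  exact ⟨y, hadj.symm, by omega⟩

open Classical in
noncomputable def par (G : SimpleGraph V) (s : ℕ → V) (n : ℕ) (w : V) : V :=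
  if ∃ k, 1 ≤ k ∧ k ≤ n ∧ s k = w then w
  else if h : ∃ w', G.Adj w' w ∧ lam G s n w' + 1 = lam G s n w then h.choose else w

lemma par_cases (w : V) :
    par G s n w = w ∨
      (G.Adj (par G s n w) w ∧ lam G s n (par G s n w) + 1 = lam G s n w) := by
  unfold par
  split_ifs with h1 h2
  · exact Or.inl rfl
  · exact Or.inr h2.choose_spec
  · exact Or.inl rfl

lemma par_adj {w : V} (hw : par G s n w ≠ w) :
    G.Adj (par G s n w) w ∧ lam G s n (par G s n w) + 1 = lam G s n w :=
  (par_cases w).resolve_left hw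

lemma par_fixed_spec (hS : IsBurningSeq G s n) {w : V} (hw : par G s n w = w) :
    ∃ k, 1 ≤ k ∧ k ≤ n ∧ s k = w ∧ lam G s n w = k := by
  by_cases h1 : ∃ k, 1 ≤ k ∧ k ≤ n ∧ s k = w
  · obtain ⟨k, hk1, hk2, hk3⟩ := h1
    exact ⟨k, hk1, hk2, hk3, by rw [← hk3, lam_s hS hk1 hk2]⟩
  · have h := exists_parent hS h1
    rw [par, if_neg h1, dif_pos h] at hw
    have := h.choose_spec.1
    rw [hw] at this
    exact absurd this (G.loopless.irrefl w)

lemma par_s {k : ℕ} (hk1 : 1 ≤ k) (hk2 : k ≤ n) : par G s n (s k) = s k := by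
  rw [par, if_pos ⟨k, hk1, hk2, rfl⟩]

lemma lam_par_le (w : V) : lam G s n (par G s n w) ≤ lam G s n w := by
  rcases par_cases (G := G) (s := s) (n := n) w with h | ⟨_, h⟩
  · rw [h]
  · omega

def burnH (G : SimpleGraph V) (s : ℕ → V) (n : ℕ) : SimpleGraph V where
  Adj a b := a ≠ b ∧ (par G s n a = b ∨ par G s n b = a)
  symm := ⟨by rintro a b ⟨h1, h2⟩; exact ⟨h1.symm, h2.symm⟩⟩
  loopless := ⟨fun a h => h.1 rfl⟩

lemma burnH_le : burnH G s n ≤ G := by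
  rintro a b ⟨hne, h | h⟩
  · have hpa : par G s n a ≠ a := by rw [h]; exact hne.symm
    have := (par_adj hpa).1
    rw [h] at this
    exact this.symm
  · have hpb : par G s n b ≠ b := by rw [h]; exact hne
    have := (par_adj hpb).1
    rw [h] at this
    exact this

lemma burnH_adj_par {w : V} (hw : par G s n w ≠ w) :
    (burnH G s n).Adj (par G s n w) w := ⟨hw, Or.inr rfl⟩

noncomputable def root (G : SimpleGraph V) (s : ℕ → V) (n : ℕ) (w : V) : V :=
  (par G s n)^[n] w

lemma iter_fixed (hS : IsBurningSeq G s n) :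
    ∀ m, ∀ w : V, lam G s n w ≤ m + 1 →
      par G s n ((par G s n)^[m] w) = (par G s n)^[m] w := by
  intro m
  induction m with
  | zero =>
    intro w hw
    simp only [Function.iterate_zero, id]
    by_contra hne
    have h1 := (par_adj hne).2
    have h2 := lam_pos hS (par G s n w)
    omega
  | succ m ih =>
    intro w hw
    by_cases hfix : par G s n w = w
    · rw [Function.iterate_fixed hfix (m + 1)]
      exact hfix
    · rw [Function.iterate_succ_apply]
      exact ih (par G s n w) (by have := (par_adj hfix).2; omega)

lemma root_fixed (hS : IsBurningSeq G s n) (w : V) :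
    par G s n (root G s n w) = root G s n w :=
  iter_fixed hS n w (lam_le_nsucc hS w)

lemma root_spec (hS : IsBurningSeq G s n) (w : V) :
    ∃ k, 1 ≤ k ∧ k ≤ n ∧ s k = root G s n w ∧ lam G s n (root G s n w) = k :=
  par_fixed_spec hS (root_fixed hS w)

noncomputable def cmap (G : SimpleGraph V) (s : ℕ → V) (n : ℕ) (w : V) : ℕ :=
  lam G s n (root G s n w)

lemma root_par (hS : IsBurningSeq G s n) (w : V) :
    root G s n (par G s n w) = root G s n w := by
  show (par G s n)^[n] (par G s n w) = _
  rw [← Function.iterate_succ_apply, Function.iterate_succ_apply']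
  exact root_fixed hS w

lemma cmap_par (hS : IsBurningSeq G s n) (w : V) :
    cmap G s n (par G s n w) = cmap G s n w := by
  rw [cmap, root_par hS, cmap]

lemma root_s (hS : IsBurningSeq G s n) {k : ℕ} (hk1 : 1 ≤ k) (hk2 : k ≤ n) :
    root G s n (s k) = s k :=
  Function.iterate_fixed (par_s hk1 hk2) n

lemma cmap_s (hS : IsBurningSeq G s n) {k : ℕ} (hk1 : 1 ≤ k) (hk2 : k ≤ n) :
    cmap G s n (s k) = k := by
  rw [cmap, root_s hS hk1 hk2, lam_s hS hk1 hk2]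

lemma chain (hS : IsBurningSeq G s n) :
    ∀ L, ∀ w : V, lam G s n w ≤ L →
      ∃ p : (burnH G s n).Walk (root G s n w) w,
        p.length + cmap G s n w = lam G s n w ∧
        ∀ x ∈ p.support, cmap G s n x = cmap G s n w := by
  intro L
  induction L with
  | zero => intro w hw; exact absurd (lam_pos hS w) (by omega)
  | succ L ih =>
    intro w hw
    by_cases hfix : par G s n w = w
    · have hroot : root G s n w = w := Function.iterate_fixed hfix n
      refine ⟨(Walk.nil' w).copy hroot.symm rfl, ?_, ?_⟩
      · simp [Walk.length_copy, cmap, hroot]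
      · intro x hx
        simp [Walk.support_copy] at hx
        rw [hx]
    · have hpl := (par_adj hfix).2
      obtain ⟨q, hq1, hq2⟩ := ih (par G s n w) (by omega)
      have hadj : (burnH G s n).Adj (par G s n w) w := burnH_adj_par hfix
      have hroot : root G s n (par G s n w) = root G s n w := root_par hS w
      refine ⟨(q.copy hroot rfl).append hadj.toWalk, ?_, ?_⟩
      · have hc := cmap_par hS w
        simp only [Walk.length_append, Walk.length_copy]
        have : hadj.toWalk.length = 1 := rfl
        omega
      · intro x hx
        rw [Walk.mem_support_append_iff] at hx
        rcases hx with hx | hx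
        · rw [Walk.support_copy] at hx
          rw [hq2 x hx, cmap_par hS]
        · simp [Adj.toWalk] at hx
          rcases hx with hx | hx
          · rw [hx, cmap_par hS]
          · rw [hx]

lemma reach_root (hS : IsBurningSeq G s n) (w : V) :
    (burnH G s n).Reachable (root G s n w) w ∧
      (burnH G s n).dist (root G s n w) w + cmap G s n w ≤ lam G s n w := by
  obtain ⟨p, hp1, _⟩ := chain hS (lam G s n w) w le_rfl
  exact ⟨⟨p⟩, by have := SimpleGraph.dist_le p; omega⟩

lemma cmap_le_lam (hS : IsBurningSeq G s n) (w : V) : cmap G s n w ≤ lam G s n w := by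
  have := (reach_root hS w).2; omega

lemma mem_burnN_H (hS : IsBurningSeq G s n) (w : V) :
    w ∈ burnN (burnH G s n) s n (lam G s n w) := by
  obtain ⟨k, hk1, hk2, hks, hkl⟩ := root_spec hS w
  obtain ⟨hr, hd⟩ := reach_root hS w
  have hck : cmap G s n w = k := hkl
  refine ⟨k, hk1, hk2, by omega, ?_, ?_⟩
  · rw [hks]; exact hr
  · rw [hks]; omega

lemma burnTime_H_eq (hS : IsBurningSeq G s n) (w : V) :
    burnTime (burnH G s n) s n w = lam G s n w := by
  apply le_antisymm
  · exact Nat.sInf_le (mem_burnN_H hS w)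
  · have hmem : w ∈ burnN (burnH G s n) s n (burnTime (burnH G s n) s n w) :=
      Nat.sInf_mem (s := {j | w ∈ burnN (burnH G s n) s n j}) ⟨lam G s n w, mem_burnN_H hS w⟩
    obtain ⟨k, h1, h2, h3, hr, hd⟩ := hmem
    have hrG : G.Reachable (s k) w := hr.mono burnH_le
    have hdG : G.dist (s k) w ≤ (burnH G s n).dist (s k) w := hr.dist_anti burnH_le
    have := lam_le (G := G) h1 h2 hrG
    omega

lemma isBurningSeq_H (hS : IsBurningSeq G s n) : IsBurningSeq (burnH G s n) s n := by
  refine ⟨hS.1, ?_, ?_⟩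
  · intro j h2 hn hmem
    obtain ⟨k, a1, a2, a3, hr, hd⟩ := hmem
    exact hS.2.1 j h2 hn
      ⟨k, a1, a2, a3, hr.mono burnH_le, le_trans (hr.dist_anti burnH_le) hd⟩
  · intro w
    obtain ⟨k, hk1, hk2, hks, hkl⟩ := root_spec hS w
    obtain ⟨hr, hd⟩ := reach_root hS w
    have hck : cmap G s n w = k := hkl
    have hlb := lam_le_nsucc hS w
    refine ⟨k, hk1, hk2, by omega, ?_, ?_⟩
    · rw [hks]; exact hr
    · rw [hks]; omega

lemma no_cycle_at_max (hS : IsBurningSeq G s n) {u b : V}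
    (h : (burnH G s n).Adj u b) (t : (burnH G s n).Walk b u)
    (hd : (Walk.cons h t).IsCycle)
    (hmax : ∀ x ∈ (Walk.cons h t).support, lam G s n x ≤ lam G s n u) : False := by
  have hub : u ≠ b := h.ne
  have htp : t.IsPath := by
    rw [Walk.isPath_def]
    simpa using hd.support_nodup
  obtain ⟨y, hadj', t', ht'⟩ := Walk.exists_eq_cons_of_ne hub t.reverse
  have hb : lam G s n b ≤ lam G s n u := hmax b (by simp)
  have hy : lam G s n y ≤ lam G s n u := by
    apply hmax
    have hy1 : y ∈ t.reverse.support := by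
      rw [ht', Walk.support_cons]
      exact List.mem_cons_of_mem _ t'.start_mem_support
    rw [Walk.support_reverse, List.mem_reverse] at hy1
    simp [Walk.support_cons]
    exact Or.inr hy1
  have key : ∀ z, (burnH G s n).Adj u z → lam G s n z ≤ lam G s n u → par G s n u = z := by
    intro z hz hlz
    rcases hz.2 with h1 | h1
    · exact h1
    · have hzz : par G s n z ≠ z := by rw [h1]; exact hz.ne
      have := (par_adj hzz).2
      rw [h1] at this
      omega
  have h1 : par G s n u = b := key b h hb
  have h2 : par G s n u = y := key y hadj' hy
  have hyb : y = b := by rw [← h2, h1]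
  subst hyb
  have htrp : t.reverse.IsPath := htp.reverse
  rw [ht'] at htrp
  have ht'p : t'.IsPath := htrp.of_cons
  have ht'nil : t' = Walk.nil := Subtype.ext_iff.mp (Path.loop_eq ⟨t', ht'p⟩)
  rw [ht'nil] at ht'
  have hl1 : t.reverse.length = 1 := by rw [ht']; simp
  rw [Walk.length_reverse] at hl1
  have h3 := hd.three_le_length
  rw [Walk.length_cons, hl1] at h3
  omega

lemma H_acyclic (hS : IsBurningSeq G s n) : (burnH G s n).IsAcyclic := by
  classical
  intro v c hc
  have hvm : v ∈ c.support.toFinset := List.mem_toFinset.mpr c.start_mem_support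
  obtain ⟨u, hu, hmaxF⟩ :=
    Finset.exists_max_image c.support.toFinset (lam G s n) ⟨v, hvm⟩
  rw [List.mem_toFinset] at hu
  have hc' := hc.rotate hu
  have hperm := Walk.support_rotate c u hu
  have hmax : ∀ x ∈ (c.rotate u hu).support, lam G s n x ≤ lam G s n u := by
    intro x hx
    rcases (Walk.mem_support_iff _).mp hx with hx | hx
    · rw [hx]
    · have : x ∈ c.support.tail := hperm.mem_iff.mp hx
      exact hmaxF x (List.mem_toFinset.mpr (List.mem_of_mem_tail this))
  revert hc' hmax
  generalize c.rotate u hu = d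
  intro hc' hmax
  cases d with
  | nil => exact hc'.ne_nil rfl
  | cons h t => exact no_cycle_at_max hS h t hc' hmax

lemma reachable_induce {W : Type*} {HH : SimpleGraph W} {S : Set W} :
    ∀ {x y : W} (p : HH.Walk x y) (hx : x ∈ S) (hy : y ∈ S)
      (_ : ∀ z ∈ p.support, z ∈ S),
      (HH.induce S).Reachable ⟨x, hx⟩ ⟨y, hy⟩ := by
  intro x y p
  induction p with
  | nil => intro hx hy _; exact Reachable.refl _
  | @cons a m b h q ih =>
    intro hx hy hp
    have hm : m ∈ S := hp m (by simp)
    have h1 : (HH.induce S).Adj ⟨a, hx⟩ ⟨m, hm⟩ := h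
    exact (h1.reachable).trans (ih hm hy fun z hz => hp z (by simp [hz]))

lemma class_tree (hS : IsBurningSeq G s n) {k : ℕ} (hk1 : 1 ≤ k) (hk2 : k ≤ n) :
    ((burnH G s n).induce {v | cmap G s n v = k}).IsTree := by
  have hsk' : s k ∈ {v | cmap G s n v = k} := cmap_s hS hk1 hk2
  constructor
  · have hreach : ∀ x : {v | cmap G s n v = k},
        ((burnH G s n).induce {v | cmap G s n v = k}).Reachable ⟨s k, hsk'⟩ x := by
      rintro ⟨x, hx⟩
      obtain ⟨p, hp1, hp2⟩ := chain hS (lam G s n x) x le_rfl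
      have hcx : cmap G s n x = k := hx
      have hrx : root G s n x = s k := by
        obtain ⟨k', a1, a2, a3, a4⟩ := root_spec hS x
        have hk' : k' = k := by
          have : cmap G s n x = k' := a4
          omega
        rw [← a3, hk']
      have hmem : ∀ z ∈ p.support, z ∈ {v | cmap G s n v = k} := by
        intro z hz
        have := hp2 z hz
        show cmap G s n z = k
        omega
      have hroot_mem : root G s n x ∈ {v | cmap G s n v = k} :=
        hmem _ p.start_mem_support
      have hr := reachable_induce p hroot_mem hx hmem
      have : (⟨root G s n x, hroot_mem⟩ : {v | cmap G s n v = k}) = ⟨s k, hsk'⟩ :=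
        Subtype.ext hrx
      rw [this] at hr
      exact hr
    haveI : Nonempty ↑{v | cmap G s n v = k} := ⟨⟨s k, hsk'⟩⟩
    exact ⟨fun a b => (hreach a).symm.trans (hreach b)⟩
  · intro v c hc
    have hinj : Function.Injective
        (SimpleGraph.Embedding.induce (G := burnH G s n) {v | cmap G s n v = k}).toHom :=
      Subtype.val_injective
    exact H_acyclic hS _ ((Walk.map_isCycle_iff_of_injective hinj).mpr hc)

end BurnAux

/-- Corollary: there are disjoint subtrees `T_1, …, T_n` of `G` whose vertex sets partition
`V(G)` such that `S_G` is a burning sequence of the disjoint union `H = T_1 + ⋯ + T_n`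
and the corresponding burning map is a homomorphism. -/
theorem stmt8 {V : Type*} [Fintype V] (G : SimpleGraph V) (s : ℕ → V) (n : ℕ)
    (hS : IsBurningSeq G s n) :
    ∃ (H : SimpleGraph V) (c : V → ℕ),
      H ≤ G ∧
      (∀ v, 1 ≤ c v ∧ c v ≤ n) ∧
      (∀ v w, H.Adj v w → c v = c w) ∧
      (∀ k, 1 ≤ k → k ≤ n → (H.induce {v | c v = k}).IsTree) ∧
      IsBurningSeq H s n ∧
      (∀ v w, H.Adj v w →
        ((burnTime H s n v : ℤ) - burnTime H s n w).natAbs = 1) := by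
  classical
  refine ⟨BurnAux.burnH G s n, BurnAux.cmap G s n, BurnAux.burnH_le, ?_, ?_,
    fun k hk1 hk2 => BurnAux.class_tree hS hk1 hk2, BurnAux.isBurningSeq_H hS, ?_⟩
  · intro v
    obtain ⟨k, h1, h2, h3, h4⟩ := BurnAux.root_spec hS v
    have hc : BurnAux.cmap G s n v = k := h4
    omega
  · intro v w hvw
    rcases hvw.2 with h | h
    · rw [← h, BurnAux.cmap_par hS]
    · rw [← h, BurnAux.cmap_par hS]
  · intro v w hvw
    rw [BurnAux.burnTime_H_eq hS, BurnAux.burnTime_H_eq hS]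
    rcases hvw.2 with h | h
    · have hne : BurnAux.par G s n v ≠ v := by rw [h]; exact hvw.1.symm
      have h2 := (BurnAux.par_adj hne).2
      rw [h] at h2
      omega
    · have hne : BurnAux.par G s n w ≠ w := by rw [h]; exact hvw.1
      have h2 := (BurnAux.par_adj hne).2
      rw [h] at h2
      omega
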